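/- For every even natural number n = 2k there exists a divisor class C on the rational elliptic surface S (namely C = kL - (k-1)E_1) such that C is an l-section of arithmetic genus p with 2p + l - 1 = n. -/
import Mathlib


/-- The intersection form of the lattice `ℤ^10` with basis `L, E_1, ..., E_9`:
`L^2 = 1`, `E_i^2 = -1`, all mixed products `0`. -/
def inter (x y : Fin 10 → ℤ) : ℤ :=
  x 0 * y 0 - ∑ i : Fin 9, x i.succ * y i.succ

/-- The fiber class `F = 3L - E_1 - ... - E_9`. -/
def F : Fin 10 → ℤ := ![3, -1, -1, -1, -1, -1, -1, -1, -1, -1]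

/-- The canonical class `K = -F = -3L + E_1 + ... + E_9`. -/
def K : Fin 10 → ℤ := ![-3, 1, 1, 1, 1, 1, 1, 1, 1, 1]

/-- For every even natural number `n` there exists a divisor class `C` on the
rational elliptic surface (namely `C = kL - (k-1)E_1` for `n = 2k`) which is an
`l`-section (`C · F = l`) of arithmetic genus `p = (1/2) C·(C + K) + 1` with
`2p + l - 1 = n`. -/
theorem even_genus_realized (n : ℕ) (hn : Even n) :
    ∃ C : Fin 10 → ℤ, ∃ l p : ℤ,
      inter C F = l ∧ inter C (C + K) / 2 + 1 = p ∧ 2*p + l - 1 = n := by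
  obtain ⟨k, hk⟩ := hn
  set m : ℤ := (k : ℤ)
  refine ⟨![m, -(m-1), 0, 0, 0, 0, 0, 0, 0, 0], 2*m + 1, 0, ?_, ?_, ?_⟩
  · simp [inter, F, Fin.sum_univ_succ]; ring
  · have : inter ![m, -(m-1), 0, 0, 0, 0, 0, 0, 0, 0]
        (![m, -(m-1), 0, 0, 0, 0, 0, 0, 0, 0] + K) = -2 := by
      simp [inter, K, Fin.sum_univ_succ]; ring
    rw [this]; decide
  · have : (n : ℤ) = 2 * m := by simp [hk, m]; ring
    rw [this]; ring
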